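/- (Menger's theorem, link version.) Let G be a simple graph on a finite vertex type V and let u v : V be distinct vertices. For every k : ℕ, the following are equivalent: (i) there exist k paths from u to v in G that are pairwise edge-disjoint (no two of them use a common edge of G); (ii) every set F of edges of G such that u and v are not connected in the graph obtained from G by deleting the edges in F satisfies k ≤ |F|. In particular, the maximum number of pairwise edge-disjoint u–v paths equals the minimum number of links whose removal disconnects u from v. -/

import Mathlib

section MengerAux
open scoped Classical
open Finset

variable {V : Type} [Fintype V] [DecidableEq V] (G : SimpleGraph V)

/-- capacity of ordered pair -/
noncomputable def mcap (a b : V) : ℤ := if G.Adj a b then 1 else 0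

variable (u v : V)

def mIsFlow (f : V → V → ℤ) : Prop :=
  (∀ a b, f b a = - f a b) ∧ (∀ a b, f a b ≤ mcap G a b) ∧
    (∀ w, w ≠ u → w ≠ v → ∑ b, f w b = 0)

def mval (f : V → V → ℤ) : ℤ := ∑ b, f u b

/-- the unit flow along a walk -/
def wflow : {x y : V} → G.Walk x y → V → V → ℤ
  | _, _, .nil => fun _ _ => 0
  | x, _, @SimpleGraph.Walk.cons _ _ _ x' _ _ p => fun a b =>
      ((if (a,b) = (x,x') then 1 else if (a,b) = (x',x) then -1 else 0) + wflow p a b)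

variable {G}

lemma arc_skew {x x' : V} (hne : x ≠ x') (a b : V) :
    (if (b,a) = (x,x') then (1:ℤ) else if (b,a) = (x',x) then -1 else 0)
      = -(if (a,b) = (x,x') then 1 else if (a,b) = (x',x) then -1 else 0) := by
  split_ifs <;> simp_all [Prod.ext_iff] <;> omega

lemma wflow_skew {x y : V} (p : G.Walk x y) (a b : V) : wflow G p b a = - wflow G p a b := by
  induction p with
  | nil => simp [wflow]
  | @cons x x' y hadj p ih =>
    simp only [wflow, ih, arc_skew hadj.ne a b]
    ring

lemma wflow_sum {x y : V} (p : G.Walk x y) (w : V) :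
    ∑ b, wflow G p w b = (if w = x then 1 else 0) - (if w = y then 1 else 0) := by
  induction p with
  | nil => simp [wflow]
  | @cons x x' y hadj p ih =>
    simp only [wflow, Finset.sum_add_distrib, ih]
    have hne : x ≠ x' := hadj.ne
    have : ∑ b, (if (w,b) = (x,x') then (1:ℤ) else if (w,b) = (x',x) then -1 else 0)
        = (if w = x then 1 else 0) - (if w = x' then 1 else 0) := by
      rcases eq_or_ne w x with rfl | hwx
      · rw [Finset.sum_eq_single x']
        · simp [hne]
        · intro b _ hb; simp [Prod.ext_iff, hb, hne]
        · simp
      · rcases eq_or_ne w x' with rfl | hwx'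
        · rw [Finset.sum_eq_single x]
          · simp [hne, hwx]
          · intro b _ hb; simp [Prod.ext_iff, hwx, hb]
          · simp
        · rw [Finset.sum_eq_zero]
          · simp [hwx, hwx']
          · intro b _; simp [Prod.ext_iff, hwx, hwx']
    rw [this]; ring
set_option linter.unusedSectionVars false

lemma wflow_cons (hadj : G.Adj x x') (p : G.Walk x' y) (a b : V) :
    wflow G (SimpleGraph.Walk.cons hadj p) a b =
      (if (a,b) = (x,x') then 1 else if (a,b) = (x',x) then -1 else 0) + wflow G p a b := rfl

lemma wflow_eq_zero {x y : V} (p : G.Walk x y) {a b : V} (h : s(a,b) ∉ p.edges) :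
    wflow G p a b = 0 := by
  induction p with
  | nil => simp [wflow]
  | @cons x x' y hadj p ih =>
    rw [SimpleGraph.Walk.edges_cons, List.mem_cons, not_or] at h
    have h1 : (a,b) ≠ (x,x') := by rintro ⟨rfl,rfl⟩; simp at h
    have h2 : (a,b) ≠ (x',x) := by
      rintro h'
      rw [Prod.mk.injEq] at h'
      obtain ⟨rfl, rfl⟩ := h'
      rw [Sym2.eq_swap] at h; simp at h
    rw [wflow_cons, if_neg h1, if_neg h2, ih h.2]
    ring

lemma flow_add_wflow_le_cap {f : V → V → ℤ} (hcap : ∀ a b, f a b ≤ mcap G a b)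
    {x y : V} (p : G.Walk x y) (hp : p.IsTrail)
    (hres : ∀ d ∈ p.darts, f d.fst d.snd < mcap G d.fst d.snd) (a b : V) :
    f a b + wflow G p a b ≤ mcap G a b := by
  induction p with
  | nil => simpa [wflow] using hcap a b
  | @cons x x' y hadj p ih =>
    rw [SimpleGraph.Walk.isTrail_cons] at hp
    rw [wflow_cons]
    by_cases h1 : (a,b) = (x,x')
    · rw [Prod.mk.injEq] at h1
      obtain ⟨rfl, rfl⟩ := h1
      have h0 : wflow G p a b = 0 := wflow_eq_zero p hp.2
      have hd : f a b < mcap G a b := by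
        apply hres ⟨(a,b), hadj⟩; simp [SimpleGraph.Walk.darts_cons]
      rw [if_pos rfl, h0]; omega
    · by_cases h2 : (a,b) = (x',x)
      · rw [Prod.mk.injEq] at h2
        obtain ⟨rfl, rfl⟩ := h2
        have h0 : wflow G p a b = 0 := by
          apply wflow_eq_zero p; rw [Sym2.eq_swap]; exact hp.2
        rw [if_neg h1, if_pos rfl, h0]
        have := hcap a b; omega
      · have h0 := ih hp.1 (fun d hd => hres d (by simp [SimpleGraph.Walk.darts_cons, hd]))
        rw [if_neg h1, if_neg h2]; omega

lemma flow_sub_wflow_le_cap {f : V → V → ℤ} (hskew : ∀ a b, f b a = - f a b)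
    (hcap : ∀ a b, f a b ≤ mcap G a b)
    {x y : V} (p : G.Walk x y) (hp : p.IsTrail)
    (hpos : ∀ d ∈ p.darts, 0 < f d.fst d.snd) (a b : V) :
    f a b - wflow G p a b ≤ mcap G a b := by
  induction p with
  | nil => simpa [wflow] using hcap a b
  | @cons x x' y hadj p ih =>
    rw [SimpleGraph.Walk.isTrail_cons] at hp
    rw [wflow_cons]
    by_cases h1 : (a,b) = (x,x')
    · rw [Prod.mk.injEq] at h1
      obtain ⟨rfl, rfl⟩ := h1
      have h0 : wflow G p a b = 0 := wflow_eq_zero p hp.2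
      have hc := hcap a b
      rw [if_pos rfl, h0]; omega
    · by_cases h2 : (a,b) = (x',x)
      · rw [Prod.mk.injEq] at h2
        obtain ⟨rfl, rfl⟩ := h2
        have h0 : wflow G p a b = 0 := by
          apply wflow_eq_zero p; rw [Sym2.eq_swap]; exact hp.2
        have hd : 0 < f b a := by
          apply hpos ⟨(b,a), hadj⟩; simp [SimpleGraph.Walk.darts_cons]
        have hs := hskew a b
        have hc : (0:ℤ) ≤ mcap G a b := by unfold mcap; split <;> omega
        rw [if_neg h1, if_pos rfl, h0]; omega
      · have h0 := ih hp.1 (fun d hd => hpos d (by simp [SimpleGraph.Walk.darts_cons, hd]))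
        rw [if_neg h1, if_neg h2]; omega

lemma residual_nonpos {f : V → V → ℤ} (hskew : ∀ a b, f b a = - f a b)
    (hcap : ∀ a b, f a b ≤ mcap G a b)
    {x y : V} (p : G.Walk x y) (hp : p.IsTrail)
    (hpos : ∀ d ∈ p.darts, 0 < f d.fst d.snd) {a b : V} (he : s(a,b) ∈ p.edges) :
    f a b - wflow G p a b ≤ 0 := by
  induction p with
  | nil => simp at he
  | @cons x x' y hadj p ih =>
    rw [SimpleGraph.Walk.isTrail_cons] at hp
    rw [SimpleGraph.Walk.edges_cons, List.mem_cons] at he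
    rw [wflow_cons]
    rcases he with he | he
    · rw [Sym2.eq_iff] at he
      rcases he with ⟨rfl, rfl⟩ | ⟨rfl, rfl⟩
      · have h0 : wflow G p a b = 0 := wflow_eq_zero p hp.2
        have hc := hcap a b
        have hcc : mcap G a b = 1 := by unfold mcap; rw [if_pos hadj]
        rw [if_pos rfl, h0]; omega
      · have h0 : wflow G p a b = 0 := by
          apply wflow_eq_zero p; rw [Sym2.eq_swap]; exact hp.2
        have hd : 0 < f b a := by
          apply hpos ⟨(b,a), hadj⟩; simp [SimpleGraph.Walk.darts_cons]
        have hs := hskew a b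
        have h1 : (a,b) ≠ (b,a) := by
          rintro h'
          rw [Prod.mk.injEq] at h'
          exact hadj.ne h'.1.symm
        rw [if_neg h1, if_pos rfl, h0]; omega
    · have hne : s(a,b) ≠ s(x,x') := fun h' => hp.2 (h' ▸ he)
      have h1 : (a,b) ≠ (x,x') := by rintro ⟨rfl,rfl⟩; exact hne rfl
      have h2 : (a,b) ≠ (x',x) := by
        rintro h'
        rw [Prod.mk.injEq] at h'
        obtain ⟨rfl, rfl⟩ := h'
        exact hne (Sym2.eq_swap)
      rw [if_neg h1, if_neg h2]
      have h0 := ih hp.1 (fun d hd => hpos d (by simp [SimpleGraph.Walk.darts_cons, hd])) he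
      omega
lemma flow_cut {f : V → V → ℤ} (hf : mIsFlow G u v f) (A : Finset V)
    (hu : u ∈ A) (hv : v ∉ A) :
    mval u f = ∑ a ∈ A, ∑ b ∈ Aᶜ, f a b := by
  obtain ⟨hskew, hcap, hcons⟩ := hf
  have hdiag : ∑ a ∈ A, ∑ b ∈ A, f a b = 0 := by
    have h1 : ∑ a ∈ A, ∑ b ∈ A, f a b = ∑ b ∈ A, ∑ a ∈ A, f a b := Finset.sum_comm
    have h2 : ∑ b ∈ A, ∑ a ∈ A, f a b = - ∑ a ∈ A, ∑ b ∈ A, f a b := by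
      rw [← Finset.sum_neg_distrib]
      refine Finset.sum_congr rfl fun x _ => ?_
      rw [← Finset.sum_neg_distrib]
      exact Finset.sum_congr rfl fun y _ => hskew x y
    linarith
  have hrow : ∑ a ∈ A, ∑ b, f a b = mval u f := by
    rw [Finset.sum_eq_single u]
    · rfl
    · intro a ha hau
      exact hcons a hau (fun h => hv (h ▸ ha))
    · intro h; exact absurd hu h
  have hsplit : ∑ a ∈ A, ∑ b, f a b
      = ∑ a ∈ A, ∑ b ∈ A, f a b + ∑ a ∈ A, ∑ b ∈ Aᶜ, f a b := by
    rw [← Finset.sum_add_distrib]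
    apply Finset.sum_congr rfl
    intro a _
    exact (Finset.sum_add_sum_compl A (f a)).symm
  rw [← hrow, hsplit, hdiag, zero_add]

lemma walk_of_chain {R : V → V → Prop} (hR : ∀ a b, R a b → G.Adj a b)
    {x y : V} (h : Relation.ReflTransGen R x y) :
    ∃ p : G.Walk x y, ∀ d ∈ p.darts, R d.fst d.snd := by
  induction h with
  | refl => exact ⟨.nil, by simp⟩
  | @tail b c hxb hbc ih =>
    obtain ⟨p, hp⟩ := ih
    refine ⟨p.append (.cons (hR _ _ hbc) .nil), ?_⟩
    intro d hd
    rw [SimpleGraph.Walk.darts_append] at hd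
    rcases List.mem_append.mp hd with hd | hd
    · exact hp d hd
    · simp only [SimpleGraph.Walk.darts_cons, SimpleGraph.Walk.darts_nil,
        List.mem_cons, List.not_mem_nil, or_false] at hd
      subst hd; exact hbc

lemma skew_flow_add {f : V → V → ℤ} (hskew : ∀ a b, f b a = - f a b)
    {x y : V} (q : G.Walk x y) (a b : V) :
    (fun a b => f a b + wflow G q a b) b a = - ((fun a b => f a b + wflow G q a b) a b) := by
  simp only [hskew a b, wflow_skew q a b]; ring

/-- A maximum flow with no residual augmenting path yields a cut of the same size,
    hence the cut condition bounds max flow value from below by k. -/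
lemma exists_big_flow (huv : u ≠ v)
    (hcut : ∀ F : Set (Sym2 V), F ⊆ G.edgeSet →
      ¬ (G.deleteEdges F).Reachable u v → (k : ℕ) ≤ F.ncard) :
    ∃ f, mIsFlow G u v f ∧ (k : ℤ) ≤ mval u f := by
  -- maximum flow
  have hbdd : ∃ b : ℤ, ∀ z : ℤ, (∃ f, mIsFlow G u v f ∧ mval u f = z) → z ≤ b := by
    refine ⟨Fintype.card V, ?_⟩
    rintro z ⟨f, ⟨_, hcap, _⟩, rfl⟩
    calc mval u f ≤ ∑ b : V, mcap G u b := Finset.sum_le_sum (fun b _ => hcap u b)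
    _ ≤ ∑ _b : V, (1:ℤ) := Finset.sum_le_sum (fun b _ => by unfold mcap; split <;> omega)
    _ = Fintype.card V := by simp
  have hinh : ∃ z : ℤ, ∃ f, mIsFlow G u v f ∧ mval u f = z := by
    refine ⟨0, fun _ _ => 0, ⟨by simp, fun a b => ?_, by simp⟩, by simp [mval]⟩
    show (0:ℤ) ≤ mcap G a b
    unfold mcap; split <;> omega
  obtain ⟨m, ⟨f, hf, hfval⟩, hmax⟩ := Int.exists_greatest_of_bdd hbdd hinh
  obtain ⟨hskew, hcap, hcons⟩ := hf
  set R : V → V → Prop := fun a b => f a b < mcap G a b with hR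
  -- no augmenting path
  have hnores : ¬ Relation.ReflTransGen R u v := by
    intro hreach
    have hRadj : ∀ a b, R a b → G.Adj a b := by
      intro a b hab
      by_contra hadj
      have h1 : mcap G a b = 0 := by unfold mcap; rw [if_neg hadj]
      have h2 : mcap G b a = 0 := by
        unfold mcap; rw [if_neg (fun h => hadj h.symm)]
      have := hcap b a
      have := hskew a b
      rw [hR] at hab
      omega
    obtain ⟨w, hw⟩ := walk_of_chain hRadj hreach
    set q := w.toPath.1 with hqdef
    have hqd : ∀ d ∈ q.darts, R d.fst d.snd :=
      fun d hd => hw d (SimpleGraph.Walk.darts_toPath_subset w hd)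
    have hqp : q.IsPath := w.toPath.2
    set f' : V → V → ℤ := fun a b => f a b + wflow G q a b with hf'
    have hflow' : mIsFlow G u v f' := by
      refine ⟨fun a b => by simp only [hf', hskew a b, wflow_skew q a b]; ring,
        fun a b => flow_add_wflow_le_cap hcap q hqp.isTrail hqd a b, ?_⟩
      intro w' hw1 hw2
      simp only [hf', Finset.sum_add_distrib, hcons w' hw1 hw2, wflow_sum q w',
        if_neg hw1, if_neg hw2]
      ring
    have hval' : mval u f' = m + 1 := by
      simp only [mval, hf', Finset.sum_add_distrib, wflow_sum q u, if_pos rfl, if_neg huv]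
      rw [← hfval]; rfl
    have := hmax (m+1) ⟨f', hflow', hval'⟩
    omega
  -- the cut from the residual-reachable set
  set A : Finset V := Finset.univ.filter (fun x => Relation.ReflTransGen R u x) with hA
  have hu : u ∈ A := by
    simp only [hA, Finset.mem_filter, Finset.mem_univ, true_and]
    exact Relation.ReflTransGen.refl
  have hv : v ∉ A := by simp [hA, hnores]
  have hbd : ∀ a ∈ A, ∀ b ∈ Aᶜ, f a b = mcap G a b := by
    intro a ha b hb
    have hnR : ¬ R a b := by
      intro hab
      simp only [hA, Finset.mem_filter, Finset.mem_univ, true_and] at ha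
      have : b ∈ A := by simp [hA, ha.tail hab]
      exact (Finset.mem_compl.mp hb) this
    have := hcap a b
    rw [hR] at hnR
    omega
  set pairs : Finset (V × V) := (A ×ˢ Aᶜ).filter (fun p => G.Adj p.1 p.2) with hpairs
  have hm : m = (pairs.card : ℤ) := by
    have h1 : mval u f = ∑ a ∈ A, ∑ b ∈ Aᶜ, f a b :=
      flow_cut u v ⟨hskew, hcap, hcons⟩ A hu hv
    have h2 : ∑ a ∈ A, ∑ b ∈ Aᶜ, f a b = ∑ a ∈ A, ∑ b ∈ Aᶜ, mcap G a b :=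
      Finset.sum_congr rfl (fun a ha => Finset.sum_congr rfl (fun b hb => hbd a ha b hb))
    have h3 : ∑ a ∈ A, ∑ b ∈ Aᶜ, mcap G a b = ∑ p ∈ A ×ˢ Aᶜ, mcap G p.1 p.2 := by
      rw [Finset.sum_product]
    have h4 : ∑ p ∈ A ×ˢ Aᶜ, mcap G p.1 p.2 = (pairs.card : ℤ) := by
      unfold mcap
      rw [Finset.sum_ite, Finset.sum_const, Finset.sum_const]
      simp [hpairs]
    rw [← hfval, h1, h2, h3, h4]
  set cutE : Finset (Sym2 V) := pairs.image (fun p => s(p.1, p.2)) with hcutE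
  have hinj : Set.InjOn (fun p : V × V => s(p.1, p.2)) pairs := by
    intro p hp p' hp' hpp
    rw [Finset.mem_coe, hpairs, Finset.mem_filter, Finset.mem_product, Finset.mem_compl] at hp hp'
    rcases Sym2.eq_iff.mp hpp with ⟨h1, h2⟩ | ⟨h1, h2⟩
    · exact Prod.ext h1 h2
    · rw [h1] at hp
      exact absurd hp.1.1 hp'.1.2
  have hcard : cutE.card = pairs.card := Finset.card_image_of_injOn hinj
  have hFsub : (↑cutE : Set (Sym2 V)) ⊆ G.edgeSet := by
    intro e he
    simp only [hcutE, Finset.coe_image, Set.mem_image, Finset.mem_coe] at he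
    obtain ⟨p, hp, rfl⟩ := he
    simp only [hpairs, Finset.mem_filter] at hp
    exact hp.2
  have hdisc : ¬ (G.deleteEdges ↑cutE).Reachable u v := by
    rintro ⟨p⟩
    obtain ⟨d, hd, hdA, hdB⟩ := p.exists_boundary_dart (↑A : Set V) hu hv
    have hadj := d.adj
    rw [SimpleGraph.deleteEdges_adj] at hadj
    apply hadj.2
    simp only [hcutE, Finset.coe_image, Set.mem_image, Finset.mem_coe]
    refine ⟨(d.fst, d.snd), ?_, rfl⟩
    simp only [hpairs, Finset.mem_filter, Finset.mem_product, Finset.mem_compl]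
    exact ⟨⟨hdA, fun h => hdB h⟩, hadj.1⟩
  have hk := hcut ↑cutE hFsub hdisc
  rw [Set.ncard_coe_finset, hcard] at hk
  refine ⟨f, ⟨hskew, hcap, hcons⟩, ?_⟩
  rw [hfval, hm]
  exact_mod_cast hk
lemma flow_decomp (huv : u ≠ v) : ∀ (n : ℕ) (f : V → V → ℤ), mIsFlow G u v f →
    (n : ℤ) ≤ mval u f →
    ∃ P : Fin n → G.Walk u v, (∀ i, (P i).IsPath) ∧
      (∀ i, ∀ d ∈ (P i).darts, 0 < f d.fst d.snd) ∧
      (∀ i j, i ≠ j → ∀ e, e ∈ (P i).edges → e ∉ (P j).edges) := by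
  intro n
  induction n with
  | zero => exact fun f _ _ => ⟨fun i => i.elim0, fun i => i.elim0, fun i => i.elim0,
      fun i => i.elim0⟩
  | succ n ih =>
    intro f hf hval
    obtain ⟨hskew, hcap, hcons⟩ := hf
    set R : V → V → Prop := fun a b => 0 < f a b with hR
    have hreach : Relation.ReflTransGen R u v := by
      by_contra hno
      set A : Finset V := Finset.univ.filter (fun x => Relation.ReflTransGen R u x) with hA
      have hu : u ∈ A := by
        simp only [hA, Finset.mem_filter, Finset.mem_univ, true_and]
        exact Relation.ReflTransGen.refl
      have hv : v ∉ A := by simp [hA, hno]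
      have h1 : mval u f = ∑ a ∈ A, ∑ b ∈ Aᶜ, f a b :=
        flow_cut u v ⟨hskew, hcap, hcons⟩ A hu hv
      have h2 : ∑ a ∈ A, ∑ b ∈ Aᶜ, f a b ≤ 0 := by
        apply Finset.sum_nonpos
        intro a ha
        apply Finset.sum_nonpos
        intro b hb
        by_contra hpos
        push_neg at hpos
        have haA : Relation.ReflTransGen R u a := by
          simpa [hA, Finset.mem_filter] using ha
        have : b ∈ A := by
          simp only [hA, Finset.mem_filter, Finset.mem_univ, true_and]
          exact haA.tail hpos
        exact (Finset.mem_compl.mp hb) this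
      omega
    have hRadj : ∀ a b, R a b → G.Adj a b := by
      intro a b hab
      by_contra hadj
      have h1 : mcap G a b = 0 := by unfold mcap; rw [if_neg hadj]
      have := hcap a b
      rw [hR] at hab
      omega
    obtain ⟨w, hw⟩ := walk_of_chain hRadj hreach
    set q := w.toPath.1 with hqdef
    have hqd : ∀ d ∈ q.darts, 0 < f d.fst d.snd :=
      fun d hd => hw d (SimpleGraph.Walk.darts_toPath_subset w hd)
    have hqp : q.IsPath := w.toPath.2
    set f' : V → V → ℤ := fun a b => f a b - wflow G q a b with hf'
    have hflow' : mIsFlow G u v f' := by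
      refine ⟨fun a b => by simp only [hf', hskew a b, wflow_skew q a b]; ring,
        fun a b => flow_sub_wflow_le_cap hskew hcap q hqp.isTrail hqd a b, ?_⟩
      intro w' hw1 hw2
      simp only [hf', Finset.sum_sub_distrib, hcons w' hw1 hw2, wflow_sum q w',
        if_neg hw1, if_neg hw2]
      ring
    have hval' : (n : ℤ) ≤ mval u f' := by
      have : mval u f' = mval u f - 1 := by
        simp only [mval, hf', Finset.sum_sub_distrib, wflow_sum q u, if_pos rfl, if_neg huv]
        norm_num
      push_cast at hval ⊢
      omega
    obtain ⟨P', hP'path, hP'pos, hP'disj⟩ := ih f' hflow' hval'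
    -- edges of P' are disjoint from edges of q
    have key : ∀ i, ∀ e ∈ (P' i).edges, e ∉ q.edges := by
      intro i e he hq
      obtain ⟨d, hd, rfl⟩ := List.mem_map.mp he
      have h1 : 0 < f' d.fst d.snd := hP'pos i d hd
      have h2 : f' d.fst d.snd ≤ 0 := by
        have : s(d.fst, d.snd) ∈ q.edges := hq
        exact residual_nonpos hskew hcap q hqp.isTrail hqd this
      omega
    refine ⟨Fin.cases q P', ?_, ?_, ?_⟩
    · intro i
      induction i using Fin.cases with
      | zero => simpa using hqp
      | succ i => simpa using hP'path i
    · intro i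
      induction i using Fin.cases with
      | zero => simpa using hqd
      | succ i =>
        simp only [Fin.cases_succ]
        intro d hd
        have h1 : 0 < f' d.fst d.snd := hP'pos i d hd
        have h2 : wflow G q d.fst d.snd = 0 := by
          apply wflow_eq_zero
          intro hmem
          exact key i s(d.fst, d.snd) (List.mem_map.mpr ⟨d, hd, rfl⟩) hmem
        simp only [hf'] at h1
        omega
    · intro i j hij e
      induction i using Fin.cases with
      | zero =>
        induction j using Fin.cases with
        | zero => exact absurd rfl hij
        | succ j =>
          simp only [Fin.cases_zero, Fin.cases_succ]
          intro he hj
          exact key j e hj he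
      | succ i =>
        induction j using Fin.cases with
        | zero =>
          simp only [Fin.cases_zero, Fin.cases_succ]
          intro he
          exact key i e he
        | succ j =>
          simp only [Fin.cases_succ]
          exact hP'disj i j (fun h => hij (h ▸ rfl)) e


end MengerAux


/-- Menger's theorem, link version: there exist `k` pairwise edge-disjoint `u`–`v`
paths iff every set of edges whose removal disconnects `u` from `v` has at least
`k` elements. -/
theorem menger_link_version
    (V : Type) [Fintype V] [DecidableEq V] (G : SimpleGraph V)
    (u v : V) (huv : u ≠ v) (k : ℕ) :
    (∃ P : Fin k → G.Walk u v,
      (∀ i : Fin k, (P i).IsPath) ∧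
      (∀ i j : Fin k, i ≠ j → ∀ e : Sym2 V, e ∈ (P i).edges → e ∉ (P j).edges)) ↔
    (∀ F : Set (Sym2 V), F ⊆ G.edgeSet →
      ¬ (G.deleteEdges F).Reachable u v → k ≤ F.ncard) := by
  constructor
  · rintro ⟨P, hpath, hdisj⟩ F hFsub hFdisc
    have hex : ∀ i : Fin k, ∃ e, e ∈ F ∧ e ∈ (P i).edges := by
      intro i
      by_contra h
      push_neg at h
      apply hFdisc
      exact ⟨(P i).transfer (G.deleteEdges F) (fun e he => by
        rw [SimpleGraph.edgeSet_deleteEdges]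
        exact ⟨(P i).edges_subset_edgeSet he, fun hf => h e hf he⟩)⟩
    choose e he1 he2 using hex
    have hinj : Function.Injective (fun i => (⟨e i, he1 i⟩ : F)) := by
      intro i j hij
      by_contra hne
      simp only [Subtype.mk.injEq] at hij
      exact hdisj i j hne (e i) (he2 i) (hij ▸ he2 j)
    have := Nat.card_le_card_of_injective _ hinj
    rwa [Nat.card_eq_fintype_card, Fintype.card_fin, Nat.card_coe_set_eq] at this
  · intro hcut
    obtain ⟨f, hf, hval⟩ := exists_big_flow u v (k := k) huv (fun F h1 h2 => hcut F h1 h2)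
    obtain ⟨P, h1, _, h3⟩ := flow_decomp u v huv k f hf hval
    exact ⟨P, h1, h3⟩
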